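/- Let V be a finite-dimensional ℂ-vector space, A(0) : V → V a nilpotent endomorphism, and M₀ an invertible matrix (nondegenerate bilinear form) on V satisfying A(0)ᵗ · M₀ + M₀ · A(0) = 0. Let A(q) ∈ End(V) ⊗ ℂ⟦q⟧ be given with constant term A(0). Then there exists a unique M(q) ∈ End(V) ⊗ ℂ⟦q⟧ with M(q)|_{q=0} = M₀ satisfying the covariant-constancy equation q·dM/dq = A(q)ᵗ · M(q) + M(q) · A(q). -/

import Mathlib

open Matrix

section Aux

variable {n : Type} [Fintype n] [DecidableEq n]

/-- The Sylvester operator `X ↦ A₀ᵀ X + X A₀`. -/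
noncomputable def mySylv (A0 : Matrix n n ℂ) : Module.End ℂ (Matrix n n ℂ) :=
  LinearMap.mulLeft ℂ A0ᵀ + LinearMap.mulRight ℂ A0

lemma mySylv_apply (A0 X : Matrix n n ℂ) : mySylv A0 X = A0ᵀ * X + X * A0 := rfl

lemma mySylv_nilpotent {A0 : Matrix n n ℂ} (h : IsNilpotent A0) :
    IsNilpotent (mySylv A0) := by
  obtain ⟨m, hm⟩ := h
  have h1 : IsNilpotent (LinearMap.mulLeft ℂ (A0ᵀ)) :=
    ⟨m, by rw [LinearMap.pow_mulLeft, ← Matrix.transpose_pow, hm]; simp⟩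
  have h2 : IsNilpotent (LinearMap.mulRight ℂ A0) :=
    ⟨m, by rw [LinearMap.pow_mulRight, hm]; simp⟩
  exact (LinearMap.commute_mulLeft_right A0ᵀ A0).isNilpotent_add h1 h2

/-- The operator `k·id − Sylvester`. -/
noncomputable def myT (A0 : Matrix n n ℂ) (k : ℕ) : Module.End ℂ (Matrix n n ℂ) :=
  (k : ℂ) • 1 - mySylv A0

lemma myT_isUnit {A0 : Matrix n n ℂ} (h : IsNilpotent A0) {k : ℕ} (hk : k ≠ 0) :
    IsUnit (myT A0 k) := by
  have hk' : (k : ℂ) ≠ 0 := Nat.cast_ne_zero.mpr hk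
  have hu : IsUnit ((k : ℂ) • (1 : Module.End ℂ (Matrix n n ℂ))) := by
    rw [← Algebra.algebraMap_eq_smul_one]
    exact (isUnit_iff_ne_zero.mpr hk').map (algebraMap ℂ _)
  have hn : IsNilpotent (-(mySylv A0)) := (mySylv_nilpotent h).neg
  have hc : Commute (-(mySylv A0)) ((k : ℂ) • (1 : Module.End ℂ (Matrix n n ℂ))) :=
    (Commute.one_right _).smul_right _
  have := hn.isUnit_add_left_of_commute hu hc
  rwa [← sub_eq_add_neg] at this
  
/-- The lower-order part of the recursion. -/
noncomputable def myR (A : ℕ → Matrix n n ℂ) (p : ℕ → Matrix n n ℂ) (k : ℕ) :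
    Matrix n n ℂ :=
  (∑ i ∈ Finset.range k, (A (i + 1))ᵀ * p (k - (i + 1))) +
    ∑ i ∈ Finset.range k, p i * A (k - i)

lemma myR_congr (A : ℕ → Matrix n n ℂ) {p q : ℕ → Matrix n n ℂ} {k : ℕ}
    (h : ∀ j, j < k → p j = q j) : myR A p k = myR A q k := by
  unfold myR
  congr 1
  · refine Finset.sum_congr rfl fun i hi => ?_
    have := Finset.mem_range.mp hi
    rw [h _ (by omega)]
  · refine Finset.sum_congr rfl fun i hi => ?_
    rw [h _ (Finset.mem_range.mp hi)]

lemma fullsum_eq (A : ℕ → Matrix n n ℂ) (p : ℕ → Matrix n n ℂ) (k : ℕ) :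
    ∑ ij ∈ Finset.HasAntidiagonal.antidiagonal k, ((A ij.1)ᵀ * p ij.2 + p ij.1 * A ij.2) =
      (A 0)ᵀ * p k + p k * A 0 + myR A p k := by
  rw [Finset.sum_add_distrib]
  rw [Finset.Nat.sum_antidiagonal_eq_sum_range_succ (fun i j => (A i)ᵀ * p j)]
  rw [Finset.Nat.sum_antidiagonal_eq_sum_range_succ (fun i j => p i * A j)]
  rw [Finset.sum_range_succ' (fun i => (A i)ᵀ * p (k - i)), Finset.sum_range_succ]
  unfold myR
  simp only [Nat.sub_zero, Nat.sub_self, Nat.add_comm 1]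
  abel

/-- Auxiliary recursive construction: `mySolAux A M0 m` is a function agreeing with the
solution on `[0, m]`. -/
noncomputable def mySolAux (A : ℕ → Matrix n n ℂ) (M0 : Matrix n n ℂ) :
    ℕ → (ℕ → Matrix n n ℂ)
  | 0 => fun _ => M0
  | (m + 1) => Function.update (mySolAux A M0 m) (m + 1)
      (Ring.inverse (myT (A 0) (m + 1)) (myR A (mySolAux A M0 m) (m + 1)))

/-- The solution. -/
noncomputable def mySol (A : ℕ → Matrix n n ℂ) (M0 : Matrix n n ℂ) (k : ℕ) :
    Matrix n n ℂ :=
  mySolAux A M0 k k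

lemma mySolAux_stable (A : ℕ → Matrix n n ℂ) (M0 : Matrix n n ℂ) :
    ∀ m j, j ≤ m → mySolAux A M0 m j = mySol A M0 j := by
  intro m
  induction m with
  | zero =>
    intro j hj
    have : j = 0 := Nat.le_zero.mp hj
    subst this; rfl
  | succ m ih =>
    intro j hj
    rcases eq_or_lt_of_le hj with h | h
    · subst h; rfl
    · have hj' : j ≤ m := by omega
      show Function.update (mySolAux A M0 m) (m + 1) _ j = _
      rw [Function.update_of_ne (by omega), ih j hj']

lemma mySol_zero (A : ℕ → Matrix n n ℂ) (M0 : Matrix n n ℂ) : mySol A M0 0 = M0 := rfl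

lemma mySol_succ (A : ℕ → Matrix n n ℂ) (M0 : Matrix n n ℂ) (m : ℕ) :
    mySol A M0 (m + 1) =
      Ring.inverse (myT (A 0) (m + 1)) (myR A (mySol A M0) (m + 1)) := by
  show Function.update (mySolAux A M0 m) (m + 1) _ (m + 1) = _
  rw [Function.update_self]
  congr 1
  exact myR_congr A fun j hj => mySolAux_stable A M0 m j (by omega)

end Aux

/-- Unique covariantly-constant extension of a pairing: given `A(q) = Σ A_k q^k` with
`A(0)` nilpotent, and an invertible `M₀` with `A(0)ᵗM₀ + M₀A(0) = 0`, there is a unique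
power series of matrices `M(q)` with `M(0) = M₀` solving `q·dM/dq = A(q)ᵗM(q) + M(q)A(q)`
(stated coefficientwise: `k·M_k = Σ_{i+j=k} (A_iᵗ M_j + M_i A_j)`). -/
theorem stmt1 {n : Type} [Fintype n] [DecidableEq n]
    (A : ℕ → Matrix n n ℂ) (hA0 : IsNilpotent (A 0))
    (M0 : Matrix n n ℂ) (hM0 : IsUnit M0)
    (hskew : (A 0)ᵀ * M0 + M0 * (A 0) = 0) :
    ∃! M : ℕ → Matrix n n ℂ, M 0 = M0 ∧
      ∀ k : ℕ, (k : ℂ) • M k =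
        ∑ ij ∈ Finset.HasAntidiagonal.antidiagonal k, ((A ij.1)ᵀ * M ij.2 + M ij.1 * A ij.2) := by
  -- key: for any `p`, the equation at `k` is equivalent to `myT (A 0) k (p k) = myR A p k`
  have key : ∀ (p : ℕ → Matrix n n ℂ) (k : ℕ),
      ((k : ℂ) • p k =
        ∑ ij ∈ Finset.HasAntidiagonal.antidiagonal k, ((A ij.1)ᵀ * p ij.2 + p ij.1 * A ij.2)) ↔
      myT (A 0) k (p k) = myR A p k := by
    intro p k
    rw [fullsum_eq]
    constructor
    · intro h
      rw [myT, LinearMap.sub_apply, LinearMap.smul_apply, Module.End.one_apply,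
        mySylv_apply]
      rw [h]; abel
    · intro h
      rw [myT, LinearMap.sub_apply, LinearMap.smul_apply, Module.End.one_apply,
        mySylv_apply] at h
      have := sub_eq_iff_eq_add.mp h
      rw [this]; abel
  refine ⟨mySol A M0, ⟨mySol_zero A M0, ?_⟩, ?_⟩
  · intro k
    rw [key]
    match k with
    | 0 =>
      rw [myT, mySol_zero]
      simp only [Nat.cast_zero, zero_smul, zero_sub, LinearMap.neg_apply, mySylv_apply,
        hskew, neg_zero]
      simp [myR]
    | (m + 1) =>
      have hu := myT_isUnit hA0 (k := m + 1) (by omega)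
      rw [mySol_succ]
      have : myT (A 0) (m + 1) * Ring.inverse (myT (A 0) (m + 1)) = 1 :=
        Ring.mul_inverse_cancel _ hu
      calc myT (A 0) (m + 1) (Ring.inverse (myT (A 0) (m + 1)) (myR A (mySol A M0) (m + 1)))
          = (myT (A 0) (m + 1) * Ring.inverse (myT (A 0) (m + 1)))
              (myR A (mySol A M0) (m + 1)) := rfl
        _ = _ := by rw [this]; rfl
  · rintro N ⟨hN0, hNeq⟩
    funext k
    induction k using Nat.strong_induction_on with
    | _ k ih =>
      match k with
      | 0 => rw [hN0, mySol_zero]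
      | (m + 1) =>
        have hu := myT_isUnit hA0 (k := m + 1) (by omega)
        have h1 : myT (A 0) (m + 1) (N (m + 1)) = myR A N (m + 1) :=
          (key N (m + 1)).mp (hNeq (m + 1))
        have h2 : myT (A 0) (m + 1) (mySol A M0 (m + 1)) = myR A (mySol A M0) (m + 1) :=
          (key (mySol A M0) (m + 1)).mp (by
            rw [key] at *
            rw [mySol_succ]
            calc myT (A 0) (m + 1) (Ring.inverse (myT (A 0) (m + 1)) (myR A (mySol A M0) (m + 1)))
                = (myT (A 0) (m + 1) * Ring.inverse (myT (A 0) (m + 1)))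
                    (myR A (mySol A M0) (m + 1)) := rfl
              _ = _ := by rw [Ring.mul_inverse_cancel _ hu]; rfl)
        have hR : myR A N (m + 1) = myR A (mySol A M0) (m + 1) :=
          myR_congr A fun j hj => ih j hj
        have hinj : Function.Injective (myT (A 0) (m + 1)) := by
          intro x y hxy
          have h := congrArg (fun z => Ring.inverse (myT (A 0) (m + 1)) z) hxy
          simpa [← Module.End.mul_apply, Ring.inverse_mul_cancel _ hu] using h
        exact hinj (by rw [h1, h2, hR])
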